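/- Let L be a first-order language with at most countably many symbols and let K be a class of finitely generated L-structures (closed under isomorphism). Then there exists a countable ultrahomogeneous L-structure M whose age equals K if and only if K is nonempty, has only countably many members up to isomorphism, is closed under passing to finitely generated substructures, has the joint embedding property, and has the amalgamation property. -/

import Mathlib

open FirstOrder FirstOrder.Language FirstOrder.Language.Structure

universe u v w

section FraisseExistence

open Set

namespace FraisseAux

variable {L : FirstOrder.Language.{u, v}}

def TaskOf (ρ : ℕ → CategoryTheory.Bundled.{w} L.Structure)
    (A : CategoryTheory.Bundled.{w} L.Structure) : Type w :=
  Σ i j : ℕ, (ρ i ↪[L] ρ j) × (ρ i ↪[L] A)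

def taskMap {ρ : ℕ → CategoryTheory.Bundled.{w} L.Structure}
    {A B : CategoryTheory.Bundled.{w} L.Structure} (g : A ↪[L] B) (τ : TaskOf ρ A) :
    TaskOf ρ B :=
  ⟨τ.1, τ.2.1, τ.2.2.1, g.comp τ.2.2.2⟩

theorem taskMap_taskMap {ρ : ℕ → CategoryTheory.Bundled.{w} L.Structure}
    {A B C : CategoryTheory.Bundled.{w} L.Structure} (g₁ : A ↪[L] B) (g₂ : B ↪[L] C)
    (τ : TaskOf ρ A) : taskMap g₂ (taskMap g₁ τ) = taskMap (g₂.comp g₁) τ := by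
  simp [taskMap, Embedding.comp_assoc]
  rfl

end FraisseAux

open FraisseAux

theorem exists_countable_ultrahomogeneous_age_eq
    {L : FirstOrder.Language.{u, v}} [Countable L.Symbols]
    {K : Set (CategoryTheory.Bundled.{w} L.Structure)}
    (hiso : ∀ M N : CategoryTheory.Bundled.{w} L.Structure,
      Nonempty (M ≃[L] N) → (M ∈ K ↔ N ∈ K))
    (hfg : ∀ M : CategoryTheory.Bundled.{w} L.Structure, M ∈ K → Structure.FG L M)
    (hn : K.Nonempty) (hcq : (Quotient.mk' '' K).Countable)
    (hp : Hereditary K) (jep : JointEmbedding K) (ap : Amalgamation K) :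
    ∃ M : CategoryTheory.Bundled.{w} L.Structure,
      Countable M ∧ L.IsUltrahomogeneous M ∧ L.age M = K := by
  haveI : Countable (Σ l, L.Functions l) :=
    (Function.Injective.countable (f := fun x => (Sum.inl x : L.Symbols)) Sum.inl_injective)
  obtain ⟨F, hF⟩ := hcq.exists_eq_range (hn.image _)
  simp only [Set.ext_iff, Quotient.forall, mem_image, mem_range, Quotient.eq'] at hF
  simp_rw [Quotient.eq_mk_iff_out] at hF
  set ρ : ℕ → CategoryTheory.Bundled.{w} L.Structure := fun n => (F n).out with hρ
  have hρK : ∀ n : ℕ, ρ n ∈ K := by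
    intro n
    obtain ⟨P, hP1, hP2⟩ := (hF (F n).out).2 ⟨n, Setoid.refl _⟩
    replace hP2 := Setoid.trans (Setoid.symm (Quotient.mk_out P)) hP2
    exact (hiso _ _ hP2).1 hP1
  have hρiso : ∀ N, N ∈ K → ∃ n, Nonempty (ρ n ≃[L] N) := by
    intro N hN
    obtain ⟨n, e⟩ := (hF N).1 ⟨N, hN, Quotient.eq_mk_iff_out.mp rfl⟩
    exact ⟨n, e⟩
  -- countability of members of K
  have hcnt : ∀ A : CategoryTheory.Bundled.{w} L.Structure, A ∈ K → Countable A :=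
    fun A hA => Structure.cg_iff_countable.1 (hfg A hA).cg
  have taskCnt : ∀ A : CategoryTheory.Bundled.{w} L.Structure, A ∈ K →
      Countable (TaskOf ρ A) := by
    intro A hA
    haveI := hcnt A hA
    haveI := fun n => hcnt (ρ n) (hρK n)
    haveI : ∀ i j : ℕ, Countable (ρ i ↪[L] ρ j) :=
      fun i j => Structure.FG.countable_embedding _ (hfg _ (hρK i))
    haveI : ∀ i : ℕ, Countable (ρ i ↪[L] A) :=
      fun i => Structure.FG.countable_embedding _ (hfg _ (hρK i))
    exact inferInstanceAs (Countable (Σ i j : ℕ, (ρ i ↪[L] ρ j) × (ρ i ↪[L] A)))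
  -- an enumeration of tasks for each K-member
  have enum : ∀ A : {X : CategoryTheory.Bundled.{w} L.Structure // X ∈ K},
      ∃ en : ℕ → Option (TaskOf ρ A.1), ∀ τ, ∃ k, en k = some τ := by
    intro ⟨A, hA⟩
    haveI := taskCnt A hA
    obtain ⟨inst⟩ := nonempty_encodable (TaskOf ρ A)
    exact ⟨inst.decode, fun τ => ⟨inst.encode τ, inst.encodek τ⟩⟩
  choose en hen using enum
  -- one construction step: joint-embed with `ρ n` and handle the task scheduled at time `n`
  have key : ∀ (n : ℕ) (A : {X : CategoryTheory.Bundled.{w} L.Structure // X ∈ K})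
      (q : ℕ → Option (TaskOf ρ A.1)),
      ∃ (B : {X : CategoryTheory.Bundled.{w} L.Structure // X ∈ K}) (g : A.1 ↪[L] B.1),
        Nonempty (ρ n ↪[L] B.1) ∧
        (∀ τ : TaskOf ρ A.1, q n = some τ →
          ∃ h : ρ τ.2.1 ↪[L] B.1, h.comp τ.2.2.1 = g.comp τ.2.2.2) := by
    rintro n ⟨A, hA⟩ q
    obtain ⟨C, hC, ⟨uu⟩, ⟨rr⟩⟩ := jep A hA (ρ n) (hρK n)
    match hq : q n with
    | none =>
      exact ⟨⟨C, hC⟩, uu, ⟨rr⟩, fun τ hτ => by cases hτ⟩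
    | some τ =>
      obtain ⟨Q, NQ, PQ, hQ, hcomm⟩ :=
        ap (ρ τ.1) C (ρ τ.2.1) (uu.comp τ.2.2.2) τ.2.2.1 (hρK τ.1) hC (hρK τ.2.1)
      refine ⟨⟨Q, hQ⟩, NQ.comp uu, ⟨NQ.comp rr⟩, fun τ' hτ' => ?_⟩
      obtain rfl : τ = τ' := by injection hτ'
      exact ⟨PQ, by rw [← hcomm, Embedding.comp_assoc]⟩
  choose Bf gf hrf hhandle using key
  -- the recursively-defined chain, carrying the current queue of tasks
  let st : ∀ _ : ℕ, Σ A : {X : CategoryTheory.Bundled.{w} L.Structure // X ∈ K},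
      ℕ → Option (TaskOf ρ A.1) := fun n =>
    Nat.rec
      ⟨⟨ρ 0, hρK 0⟩, fun t =>
        if (Nat.unpair t).1 = 0 then en ⟨ρ 0, hρK 0⟩ (Nat.unpair t).2 else none⟩
      (fun n s =>
        ⟨Bf n s.1 s.2, fun t =>
          if (Nat.unpair t).1 = n + 1 then en (Bf n s.1 s.2) (Nat.unpair t).2
          else Option.map (taskMap (gf n s.1 s.2)) (s.2 t)⟩)
      n
  let AA : ℕ → CategoryTheory.Bundled.{w} L.Structure := fun n => (st n).1.1
  let qq : ∀ n : ℕ, ℕ → Option (TaskOf ρ (AA n)) := fun n => (st n).2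
  let gs : ∀ n : ℕ, AA n ↪[L] AA (n + 1) := fun n => gf n (st n).1 (st n).2
  have qq_zero : ∀ t, qq 0 t =
      if (Nat.unpair t).1 = 0 then en ⟨ρ 0, hρK 0⟩ (Nat.unpair t).2 else none := fun _ => rfl
  have qq_succ : ∀ n t, qq (n + 1) t =
      if (Nat.unpair t).1 = n + 1 then en (st (n+1)).1 (Nat.unpair t).2
      else Option.map (taskMap (gs n)) (qq n t) := fun _ _ => rfl
  -- the directed system of composed embeddings
  let fm : ∀ i j : ℕ, i ≤ j → AA i ↪[L] AA j := DirectedSystem.natLERec gs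
  haveI dsys : DirectedSystem (fun n => AA n) (fun i j h => fm i j h) := by
    dsimp only [fm]; infer_instance
  have fm_self : ∀ i (x : AA i), fm i i le_rfl x = x := fun i x => dsys.map_self x
  have fm_succ : ∀ t (x : AA t), fm t (t + 1) (Nat.le_succ t) x = gs t x := by
    intro t x
    rw [DirectedSystem.coe_natLERec]
    exact Nat.leRecOn_succ' (C := fun n => ((AA n : CategoryTheory.Bundled L.Structure) : Type w)) x
  have fm_step : ∀ (s u : ℕ) (h : s ≤ u) (x : AA s),
      fm s (u + 1) (h.trans (Nat.le_succ u)) x = gs u (fm s u h x) := by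
    intro s u h x
    rw [← fm_succ u]
    exact (dsys.map_map h (Nat.le_succ u) x).symm
  -- positions of pending tasks are never in the past
  have hnone : ∀ s t, s < (Nat.unpair t).1 → qq s t = none := by
    intro s
    induction s with
    | zero => intro t h; rw [qq_zero, if_neg (by omega)]
    | succ n ih =>
      intro t h
      rw [qq_succ, if_neg (by omega), ih t (by omega), Option.map_none]
  -- pending tasks are propagated (at a fixed position) along the chain
  have hprop : ∀ (s t : ℕ) (τ : TaskOf ρ (AA s)), qq s t = some τ → ∀ (u : ℕ) (hsu : s ≤ u),
      u ≤ t → qq u t = some (taskMap (fm s u hsu) τ) := by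
    intro s t τ hτ u hsu
    induction u, hsu using Nat.le_induction with
    | base =>
      intro _
      have h4 : (fm s s le_rfl).comp τ.2.2.2 = τ.2.2.2 := Embedding.ext fun x => fm_self s _
      show qq s t = some ⟨τ.1, τ.2.1, τ.2.2.1, (fm s s le_rfl).comp τ.2.2.2⟩
      rw [h4]
      exact hτ
    | succ u hsu ih =>
      intro hut
      have hut' : u ≤ t := by omega
      have hq : qq u t = some (taskMap (fm s u hsu) τ) := ih hut'
      have hne : (Nat.unpair t).1 ≠ u + 1 := by
        by_contra hc
        have : qq u t = none := hnone u t (by omega)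
        rw [this] at hq; cases hq
      rw [qq_succ, if_neg hne, hq, Option.map_some, taskMap_taskMap]
      congr 1
      have : (gs u).comp (fm s u hsu) = fm s (u + 1) (by omega) :=
        Embedding.ext fun x => (fm_step s u hsu x).symm
      rw [this]
  -- every task is pending at some future position
  have hfill : ∀ (n : ℕ) (τ : TaskOf ρ (AA n)), ∃ t, n ≤ t ∧ qq n t = some τ := by
    intro n τ
    rcases n with _ | n
    · obtain ⟨k, hk⟩ := hen (st 0).1 τ
      exact ⟨Nat.pair 0 k, Nat.zero_le _, by rw [qq_zero, Nat.unpair_pair]; exact (if_pos rfl).trans hk⟩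
    · obtain ⟨k, hk⟩ := hen (st (n+1)).1 τ
      refine ⟨Nat.pair (n + 1) k, Nat.left_le_pair _ _, ?_⟩
      rw [qq_succ, Nat.unpair_pair]
      simpa using hk
  -- hence every task is eventually handled
  have hext : ∀ (n : ℕ) (τ : TaskOf ρ (AA n)), ∃ (m : ℕ) (h : n ≤ m)
      (wi : ρ τ.2.1 ↪[L] AA m), wi.comp τ.2.2.1 = (fm n m h).comp τ.2.2.2 := by
    intro n τ
    obtain ⟨t, hnt, hτ⟩ := hfill n τ
    have hqt : qq t t = some (taskMap (fm n t hnt) τ) := hprop n t τ hτ t hnt le_rfl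
    obtain ⟨wi, hwi⟩ := hhandle t (st t).1 (st t).2 (taskMap (fm n t hnt) τ) hqt
    have hwi' : wi.comp τ.2.2.1 = (gs t).comp ((fm n t hnt).comp τ.2.2.2) := hwi
    refine ⟨t + 1, by omega, wi, ?_⟩
    refine hwi'.trans ?_
    exact Embedding.ext fun x => by
      rw [Embedding.comp_apply, Embedding.comp_apply, Embedding.comp_apply, ← fm_step]
  -- the limit structure
  let MM := Language.DirectLimit (fun n => (AA n : Type w)) fm
  let ι : ∀ n, AA n ↪[L] MM := fun n => Language.DirectLimit.of L ℕ (fun n => (AA n : Type w)) fm n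
  have hMcg : Structure.CG L MM := Language.DirectLimit.cg _ (fun n => (hfg _ (st n).1.2).cg)
  haveI hMcnt : Countable MM := Structure.cg_iff_countable.1 hMcg
  -- the age of the limit is `K`
  have hage : L.age MM = K := by
    refine (age_directLimit (fun n => (AA n : Type w)) fm).trans
      (subset_antisymm (iUnion_subset fun n N hN => hp (st n).1.1 (st n).1.2 hN) fun N KN => ?_)
    obtain ⟨n, ⟨e⟩⟩ := hρiso N KN
    refine mem_iUnion_of_mem (n + 1) ⟨hfg _ KN, ⟨Embedding.comp ?_ e.symm.toEmbedding⟩⟩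
    exact (hrf n (st n).1 (st n).2).some
  -- every embedding of a finitely generated structure into the limit factors through a stage
  have hfactor : ∀ (P : CategoryTheory.Bundled.{w} L.Structure), P ∈ K →
      ∀ f0 : P ↪[L] MM, ∃ (n : ℕ) (f' : P ↪[L] AA n), (ι n).comp f' = f0 := by
    intro P hP f0
    obtain ⟨n, T, hT⟩ := Language.DirectLimit.exists_fg_substructure_in_Sigma
      (G := fun n => (AA n : Type w)) (f := fm) f0.toHom.range ((hfg P hP).range f0.toHom)
    have hle : f0.toHom.range ≤ (ι n).toHom.range := by
      rw [← hT]
      rintro x ⟨y, _, rfl⟩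
      exact ⟨y, rfl⟩
    refine ⟨n, (ι n).equivRange.symm.toEmbedding.comp
      ((Substructure.inclusion hle).comp f0.equivRange.toEmbedding), Embedding.ext fun x => ?_⟩
    rw [Embedding.comp_apply, Embedding.comp_apply, Embedding.comp_apply]
    have := congr_arg Subtype.val
      ((ι n).equivRange.apply_symm_apply ((Substructure.inclusion hle) (f0.equivRange x)))
    refine Eq.trans ?_ (this.trans rfl)
    rfl
  -- the extension property
  have hEP : ∀ (P Q : CategoryTheory.Bundled.{w} L.Structure), P ∈ K → Q ∈ K →
      ∀ (e : P ↪[L] Q) (f0 : P ↪[L] MM), ∃ g0 : Q ↪[L] MM, g0.comp e = f0 := by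
    intro P Q hP hQ e f0
    obtain ⟨n, f', hf'⟩ := hfactor P hP f0
    obtain ⟨i, ⟨eP⟩⟩ := hρiso P hP
    obtain ⟨j, ⟨eQ⟩⟩ := hρiso Q hQ
    let τ : TaskOf ρ (AA n) :=
      ⟨i, j, eQ.symm.toEmbedding.comp (e.comp eP.toEmbedding), f'.comp eP.toEmbedding⟩
    obtain ⟨m, hnm, wi, hwi⟩ := hext n τ
    refine ⟨(ι m).comp (wi.comp eQ.symm.toEmbedding), Embedding.ext fun x => ?_⟩
    have hx : ∀ y : ρ i, wi (eQ.symm (e (eP y))) = fm n m hnm (f' (eP y)) := by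
      intro y
      have := congr_fun (congr_arg (fun (z : _ ↪[L] AA m) => (z : ρ i → AA m)) hwi) y
      exact this
    have hx' : wi (eQ.symm (e x)) = fm n m hnm (f' x) := by
      have := hx (eP.symm x)
      rwa [FirstOrder.Language.Equiv.apply_symm_apply] at this
    rw [← hf']
    simp only [Embedding.comp_apply, FirstOrder.Language.Equiv.coe_toEmbedding]
    rw [hx']
    exact Language.DirectLimit.of_f
  -- ultrahomogeneity, via the extension-pair criterion
  have hUH : L.IsUltrahomogeneous MM := by
    rw [isUltrahomogeneous_iff_IsExtensionPair Structure.cg_of_countable]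
    rintro ⟨f, f_FG⟩ m
    let S := f.dom ⊔ Substructure.closure L {m}
    have S_FG : S.FG := f_FG.sup (Substructure.fg_closure_singleton m)
    have hPmem : CategoryTheory.Bundled.mk ↥f.dom ∈ K := hage ▸ age.fg_substructure f_FG
    have hQmem : CategoryTheory.Bundled.mk ↥S ∈ K := hage ▸ age.fg_substructure S_FG
    obtain ⟨g, hg⟩ := hEP (CategoryTheory.Bundled.mk ↥f.dom) (CategoryTheory.Bundled.mk ↥S)
      hPmem hQmem (Substructure.inclusion (le_sup_left : f.dom ≤ S))
      ((Substructure.subtype f.cod).comp f.toEquiv.toEmbedding)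
    have g_eq : (Substructure.subtype f.cod).comp f.toEquiv.toEmbedding =
        g.comp (Substructure.inclusion (le_sup_left : f.dom ≤ S)) := hg.symm
    refine ⟨⟨⟨S, g.toHom.range, g.equivRange⟩, S_FG⟩,
      Substructure.subset_closure.trans (le_sup_right : _ ≤ S) (Set.mem_singleton m),
      ⟨le_sup_left, ?_⟩⟩
    ext
    simp [Subtype.mk_le_mk, PartialEquiv.le_def, g_eq]
  exact ⟨CategoryTheory.Bundled.of MM, hMcnt, hUH, hage⟩


end FraisseExistence

/-- **Fraïssé's theorem, part (ii), existence.** Let `L` be a first-order language with at most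
countably many symbols, and let `K` be a class of finitely generated `L`-structures closed under
isomorphism.  Then there is a countable ultrahomogeneous `L`-structure whose age is `K` if and
only if `K` is nonempty, has only countably many members up to isomorphism, is closed under
finitely generated substructures (hereditary property), and has the joint embedding and
amalgamation properties. -/
theorem exists_countable_ultrahomogeneous_age_eq_iff
    {L : FirstOrder.Language.{u, v}} [Countable L.Symbols]
    (K : Set (CategoryTheory.Bundled.{w} L.Structure))
    (hiso : ∀ M N : CategoryTheory.Bundled.{w} L.Structure,
      Nonempty (M ≃[L] N) → (M ∈ K ↔ N ∈ K))
    (hfg : ∀ M : CategoryTheory.Bundled.{w} L.Structure, M ∈ K → Structure.FG L M) :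
    (∃ M : CategoryTheory.Bundled.{w} L.Structure,
        Countable M ∧ L.IsUltrahomogeneous M ∧ L.age M = K) ↔
      (K.Nonempty ∧ (Quotient.mk' '' K).Countable ∧
        Hereditary K ∧ JointEmbedding K ∧ Amalgamation K) := by
  haveI : Countable (Σ l, L.Functions l) :=
    (Function.Injective.countable (f := fun x => (Sum.inl x : L.Symbols)) Sum.inl_injective)
  constructor
  · rintro ⟨M, hc, hu, rfl⟩
    haveI : Countable M := hc
    exact ⟨age.nonempty M, age.countable_quotient M, age.hereditary M, age.jointEmbedding M,
      hu.amalgamation_age⟩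
  · rintro ⟨hn, hcq, hp, jep, ap⟩
    exact exists_countable_ultrahomogeneous_age_eq hiso hfg hn hcq hp jep ap
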